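/- For all integers k ≥ 0 and n ≥ 0 the inequality ρ_k(n) + k·ρ_k(∞) < (k+1)·ρ_k(n+1) holds, where ρ_k(∞) = 1 + 2/(k + 2 + √(k² + 4k)). -/

import Mathlib

set_option maxHeartbeats 1000000


/-- For all integers `k ≥ 0` and `n ≥ 0` one has
`ρ_k(n) + k·ρ_k(∞) < (k+1)·ρ_k(n+1)`, where `ρ_k(∞) = 1 + 2/(k + 2 + √(k² + 4k))`,
`ρ_k(0) = 0` and `ρ_k(n) = 1 + u_{n−1}/(u_n + 1)` for `n ≥ 1`, with `u₀ = 0`,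
`u₁ = 1`, `u_{n+2} = (k+2)·u_{n+1} − u_n`. -/
theorem rho_k_convexity_inequality (k : ℕ) (u : ℕ → ℝ)
    (hu0 : u 0 = 0) (hu1 : u 1 = 1)
    (hrec : ∀ n : ℕ, u (n + 2) = ((k : ℝ) + 2) * u (n + 1) - u n)
    (rk : ℕ → ℝ) (hrk0 : rk 0 = 0)
    (hrk : ∀ n : ℕ, 1 ≤ n → rk n = 1 + u (n - 1) / (u n + 1))
    (n : ℕ) :
    rk n + (k : ℝ) * (1 + 2 / ((k : ℝ) + 2 + Real.sqrt ((k : ℝ) ^ 2 + 4 * (k : ℝ)))) <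
      ((k : ℝ) + 1) * rk (n + 1) := by
  have hk0 : (0:ℝ) ≤ (k:ℝ) := Nat.cast_nonneg k
  set s : ℝ := Real.sqrt ((k : ℝ) ^ 2 + 4 * (k : ℝ)) with hs
  have hs0 : 0 ≤ s := Real.sqrt_nonneg _
  have hs2 : s ^ 2 = (k:ℝ)^2 + 4*(k:ℝ) := Real.sq_sqrt (by positivity)
  have hden : 0 < (k:ℝ) + 2 + s := by linarith
  set b : ℝ := ((k:ℝ) + 2 - s) / 2 with hbdef
  have hβeq : 2 / ((k:ℝ) + 2 + s) = b := by
    rw [hbdef, div_eq_div_iff hden.ne' (by norm_num : (2:ℝ) ≠ 0)]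
    nlinarith [hs2]
  have hbpos : 0 < b := by
    rw [hbdef]
    have : s < (k:ℝ) + 2 := by nlinarith [hs2, hs0]
    linarith
  have hble1 : b ≤ 1 := by
    rw [hbdef]
    have : (k:ℝ) ≤ s := by nlinarith [hs2, hs0]
    linarith
  have hquad : b ^ 2 = ((k:ℝ) + 2) * b - 1 := by
    rw [hbdef]; linear_combination hs2 / 4
  -- key scalar inequality (A): b * (k²+3k+1) ≤ k+1
  have hA : b * ((k:ℝ)^2 + 3*(k:ℝ) + 1) ≤ (k:ℝ) + 1 := by
    have hkey : (k:ℝ) * ((k:ℝ)^2 + 5*(k:ℝ) + 5) ≤ ((k:ℝ)^2 + 3*(k:ℝ) + 1) * s := by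
      by_contra h
      push_neg at h
      have ht0 : 0 ≤ ((k:ℝ)^2 + 3*(k:ℝ) + 1) * s := by positivity
      nlinarith [hs2, ht0, h]
    rw [hbdef]
    nlinarith [hkey]
  -- key scalar inequality (B): k * b < 1
  have hB : (k:ℝ) * b < 1 := by
    rcases Nat.eq_zero_or_pos k with hk | hk
    · rw [hk]; norm_num
    · have hk1 : (1:ℝ) ≤ (k:ℝ) := by exact_mod_cast hk
      have hkey : (k:ℝ)^2 + 2*(k:ℝ) - 2 < (k:ℝ) * s := by
        by_contra h
        push_neg at h
        have ht0 : 0 ≤ (k:ℝ) * s := by positivity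
        nlinarith [hs2, ht0, h, hk1]
      rw [hbdef]
      nlinarith [hkey]
  clear_value s b
  -- monotonicity / positivity of u
  have hmono : ∀ m : ℕ, 0 ≤ u m ∧ u m + 1 ≤ u (m + 1) := by
    intro m
    induction m with
    | zero => constructor <;> simp [hu0, hu1]
    | succ p ih =>
      obtain ⟨h0, h1⟩ := ih
      have h2 : 0 ≤ u (p + 1) := by linarith
      refine ⟨h2, ?_⟩
      rw [hrec p]
      nlinarith [mul_nonneg hk0 h2]
  -- Cassini identity
  have hcass : ∀ m : ℕ, u (m + 1) * u (m + 1) - u m * u (m + 2) = 1 := by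
    intro m
    induction m with
    | zero => rw [hu0, hu1]; ring
    | succ p ih =>
      rw [hrec (p + 1)]
      linear_combination ih + u (p + 2) * hrec p
  -- b * u_{n+1} - u_n = b^{n+1}
  have hpow : ∀ m : ℕ, b * u (m + 1) - u m = b ^ (m + 1) := by
    intro m
    induction m with
    | zero => rw [hu0, hu1]; ring
    | succ p ih =>
      rw [hrec p]
      linear_combination b * ih - u (p + 1) * hquad
  rw [hβeq]
  rcases n with _ | m
  · -- n = 0
    have h1 : rk 1 = 1 + u 0 / (u 1 + 1) := hrk 1 le_rfl
    rw [hrk0, h1, hu0, hu1]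
    norm_num
    linarith [hB]
  · -- n = m + 1
    obtain ⟨hA0, hAB⟩ := hmono m
    obtain ⟨hB0, hBC⟩ := hmono (m + 1)
    have hB1 : (0:ℝ) < u (m + 1) + 1 := by linarith
    have hC1 : (0:ℝ) < u (m + 2) + 1 := by linarith
    have hCassm : u (m + 1) * u (m + 1) - u m * u (m + 2) = 1 := hcass m
    set q : ℝ := b ^ (m + 1) with hqdef
    have hq0 : 0 < q := pow_pos hbpos _
    have hqb : q ≤ b := by
      calc q = b ^ (m + 1) := rfl
        _ ≤ b ^ 1 := pow_le_pow_of_le_one (le_of_lt hbpos) hble1 (by omega)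
        _ = b := pow_one b
    have hbBA : b * u (m + 1) - u m = q := hpow m
    have hbCB : b * u (m + 2) - u (m + 1) = b * q := by
      have h2 : b * u (m + 2) - u (m + 1) = b ^ (m + 2) := hpow (m + 1)
      have h3 : b ^ (m + 2) = b * q := by rw [hqdef, pow_succ]; ring
      rw [h3] at h2
      exact h2
    clear_value q
    -- positivity of the key polynomial
    have hP : 0 < u (m + 1) * ((1 - b) - (k:ℝ) * b * (1 + q)) + (1 + q) * (1 - (k:ℝ) * b) := by
      have hc : 0 ≤ (1 - b) - (k:ℝ) * b * (1 + q) := by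
        have h1 : (k:ℝ) * b * (1 + q) ≤ (k:ℝ) * b * (1 + b) :=
          mul_le_mul_of_nonneg_left (by linarith) (by positivity)
        have h2 : (1 - b) - (k:ℝ) * b * (1 + b) = ((k:ℝ) + 1) - b * ((k:ℝ)^2 + 3*(k:ℝ) + 1) := by
          linear_combination (-(k:ℝ)) * hquad
        linarith [hA, h1]
      have hBpos : (0:ℝ) < u (m + 1) := by linarith
      have hm1 : 0 ≤ u (m + 1) * ((1 - b) - (k:ℝ) * b * (1 + q)) :=
        mul_nonneg (le_of_lt hBpos) hc
      have hm2 : 0 < (1 + q) * (1 - (k:ℝ) * b) := mul_pos (by linarith) (by linarith)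
      linarith
    -- rewrite rk values
    have hr1 : rk (m + 1) = 1 + u m / (u (m + 1) + 1) := by
      rw [hrk (m + 1) (by omega)]; norm_num
    have hr2 : rk (m + 2) = 1 + u (m + 1) / (u (m + 2) + 1) := by
      rw [hrk (m + 2) (by omega)]; norm_num
    have hB1' : u (m + 1) + 1 ≠ 0 := ne_of_gt hB1
    have hC1' : u (m + 2) + 1 ≠ 0 := ne_of_gt hC1
    have hdA : u m / (u (m + 1) + 1) * (u (m + 1) + 1) = u m := div_mul_cancel₀ _ hB1'
    have hdB : u (m + 1) / (u (m + 2) + 1) * (u (m + 2) + 1) = u (m + 1) :=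
      div_mul_cancel₀ _ hC1'
    have eL : (1 + u m / (u (m + 1) + 1) + (k:ℝ) * (1 + b)) * ((u (m + 1) + 1) * (u (m + 2) + 1))
        = (u (m + 1) + 1 + u m) * (u (m + 2) + 1) +
          (k:ℝ) * (1 + b) * ((u (m + 1) + 1) * (u (m + 2) + 1)) := by
      linear_combination (u (m + 2) + 1) * hdA
    have eR : (((k:ℝ) + 1) * (1 + u (m + 1) / (u (m + 2) + 1))) *
          ((u (m + 1) + 1) * (u (m + 2) + 1))
        = ((k:ℝ) + 1) * (u (m + 2) + 1 + u (m + 1)) * (u (m + 1) + 1) := by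
      linear_combination ((k:ℝ) + 1) * (u (m + 1) + 1) * hdB
    have hiden : ((k:ℝ) + 1) * (u (m + 2) + 1 + u (m + 1)) * (u (m + 1) + 1) -
          ((u (m + 1) + 1 + u m) * (u (m + 2) + 1) +
            (k:ℝ) * (1 + b) * ((u (m + 1) + 1) * (u (m + 2) + 1)))
        = u (m + 1) * ((1 - b) - (k:ℝ) * b * (1 + q)) + (1 + q) * (1 - (k:ℝ) * b) := by
      linear_combination hCassm - (k:ℝ) * (u (m + 1) + 1) * hbCB + hbBA
    have key : (1 + u m / (u (m + 1) + 1) + (k:ℝ) * (1 + b)) *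
          ((u (m + 1) + 1) * (u (m + 2) + 1)) <
        (((k:ℝ) + 1) * (1 + u (m + 1) / (u (m + 2) + 1))) *
          ((u (m + 1) + 1) * (u (m + 2) + 1)) := by
      rw [eL, eR]
      linarith [hP, hiden]
    have hfin := lt_of_mul_lt_mul_right key (le_of_lt (mul_pos hB1 hC1))
    rw [hr1, show m + 1 + 1 = m + 2 from rfl, hr2]
    exact hfin
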